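/- Let k be a positive integer with k = rank(T). Then the image of K_T equals the kernel of T, i.e., the K-linear span of the vectors K_T(f₁,…,f_k; v₁,…,v_{k+1}) over all choices of f₁,…,f_k ∈ V* and v₁,…,v_{k+1} ∈ U is exactly ker(T). -/

import Mathlib

set_option maxHeartbeats 1000000


open Finset

/-- The map `K_T` from the paper: for `f₁,…,f_k ∈ V*` and `v₁,…,v_{k+1} ∈ U`,
`K_T(f₁,…,f_k; v₁,…,v_{k+1}) = Σ_{σ ∈ S_{k+1}} sign(σ) · Π_i f_i(T(v_{σ(i)})) · v_{σ(k+1)}`. -/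
noncomputable def paperKT {K U V : Type*} [Field K] [AddCommGroup U] [Module K U]
    [AddCommGroup V] [Module K V] (T : U →ₗ[K] V) (k : ℕ)
    (f : Fin k → (V →ₗ[K] K)) (v : Fin (k + 1) → U) : U :=
  ∑ σ : Equiv.Perm (Fin (k + 1)),
    ((Equiv.Perm.sign σ : ℤ) : K) •
      (∏ i : Fin k, f i (T (v (σ i.castSucc)))) • v (σ (Fin.last k))

-- direction 1: image ⊆ ker
lemma paperKT_mem_ker {K U V : Type*} [Field K]
    [AddCommGroup U] [Module K U] [FiniteDimensional K U]
    [AddCommGroup V] [Module K V] [FiniteDimensional K V]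
    (T : U →ₗ[K] V) (k : ℕ)
    (heq : k = Module.finrank K (LinearMap.range T))
    (f : Fin k → (V →ₗ[K] K)) (v : Fin (k + 1) → U) :
    T (paperKT T k f v) = 0 := by
  rw [← Module.forall_dual_apply_eq_zero_iff K]
  intro g
  have key : g (T (paperKT T k f v)) =
      (Matrix.of fun i j : Fin (k+1) => T.dualMap ((Fin.snoc f g : Fin (k+1) → Module.Dual K V) j) (v i)).det := by
    rw [Matrix.det_apply']
    unfold paperKT
    rw [map_sum, map_sum]
    refine Finset.sum_congr rfl fun σ _ => ?_
    rw [map_smul, map_smul, map_smul, map_smul]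
    have : ∏ i : Fin (k+1),
        (Matrix.of fun i j : Fin (k+1) => T.dualMap ((Fin.snoc f g : Fin (k+1) → Module.Dual K V) j) (v i)) (σ i) i
        = (∏ i : Fin k, f i (T (v (σ i.castSucc)))) * g (T (v (σ (Fin.last k)))) := by
      rw [Fin.prod_univ_castSucc]
      simp [Fin.snoc_castSucc, Fin.snoc_last]
    rw [this]
    simp [smul_smul, mul_comm, mul_assoc]
  rw [key]
  -- the k+1 functionals lie in range T.dualMap, which has finrank k
  set φ : Fin (k+1) → Module.Dual K U := fun j => T.dualMap ((Fin.snoc f g : Fin (k+1) → Module.Dual K V) j) with hφ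
  have hmem : ∀ j, φ j ∈ LinearMap.range T.dualMap := fun j => ⟨_, rfl⟩
  set R := LinearMap.range T.dualMap
  have hR : Module.finrank K R = k := by
    rw [LinearMap.finrank_range_dualMap_eq_finrank_range, ← heq]
  have hnLI : ¬ LinearIndependent K (fun j => (⟨φ j, hmem j⟩ : R)) := by
    intro h
    have h2 := LinearIndependent.fintype_card_le_finrank (R := K) (M := R) h
    rw [hR, Fintype.card_fin] at h2
    omega
  obtain ⟨c, hc, j₀, hj₀⟩ :=
    (Fintype.not_linearIndependent_iff (R := K)
      (v := fun j => (⟨φ j, hmem j⟩ : R))).mp hnLI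
  have hrel : ∑ j, c j • φ j = 0 := by
    have := congrArg (Submodule.subtype R) hc
    simpa using this
  rw [← Matrix.exists_mulVec_eq_zero_iff]
  refine ⟨c, fun h => hj₀ (by rw [h]; rfl), ?_⟩
  funext i
  have := congrArg (fun (ψ : Module.Dual K U) => ψ (v i)) hrel
  simpa [Matrix.mulVec, dotProduct, mul_comm, hφ, LinearMap.dualMap_apply] using this

/-- If `0 < k = rank T`, the span of the image of `K_T` is exactly the kernel of `T`. -/
theorem paperKT_span_eq_ker {K U V : Type*} [Field K] [CharZero K]
    [AddCommGroup U] [Module K U] [FiniteDimensional K U]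
    [AddCommGroup V] [Module K V] [FiniteDimensional K V]
    (T : U →ₗ[K] V) (k : ℕ) (hk : 0 < k)
    (heq : k = Module.finrank K (LinearMap.range T)) :
    Submodule.span K
      {u : U | ∃ (f : Fin k → (V →ₗ[K] K)) (v : Fin (k + 1) → U), u = paperKT T k f v}
      = LinearMap.ker T := by
  apply le_antisymm
  · rw [Submodule.span_le]
    rintro u ⟨f, v, rfl⟩
    exact LinearMap.mem_ker.mpr (paperKT_mem_ker T k heq f v)
  · intro u hu
    apply Submodule.subset_span
    have hu' : T u = 0 := hu
    have b : Module.Basis (Fin k) K (LinearMap.range T) :=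
      Module.finBasisOfFinrankEq K _ heq.symm
    choose w hw using fun i => (b i).2
    choose f hf using fun i => LinearMap.exists_extend (V' := K) (b.coord i)
    have hfw : ∀ i j, f i (T (w j)) = if i = j then 1 else 0 := by
      intro i j
      have : f i (T (w j)) = f i ((LinearMap.range T).subtype (b j)) := by
        rw [Submodule.coe_subtype, hw j]
      rw [this, ← LinearMap.comp_apply, hf i, Module.Basis.coord_apply, Module.Basis.repr_self,
        Finsupp.single_apply, eq_comm]
      simp [eq_comm]
    refine ⟨f, Fin.snoc w u, ?_⟩
    unfold paperKT
    rw [Finset.sum_eq_single (1 : Equiv.Perm (Fin (k+1)))]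
    · simp [Fin.snoc_castSucc, Fin.snoc_last, hfw]
    · intro σ _ hσ
      rcases eq_or_ne (σ (Fin.last k)) (Fin.last k) with hlast | hlast
      · -- σ fixes last but σ ≠ 1 : some castSucc i moved
        obtain ⟨x, hx⟩ : ∃ x, σ x ≠ x := by
          by_contra h
          push_neg at h
          exact hσ (Equiv.ext h)
        have hxl : x ≠ Fin.last k := fun h => hx (h ▸ hlast)
        obtain ⟨i, rfl⟩ := Fin.exists_castSucc_eq.mpr hxl
        have h1 : σ i.castSucc ≠ Fin.last k := fun h => by
          exact hxl (σ.injective (h.trans hlast.symm))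
        obtain ⟨j, hj⟩ := Fin.exists_castSucc_eq.mpr h1
        have hji : j ≠ i := by
          intro h; subst h; exact hx hj.symm
        have : f i (T ((Fin.snoc w u : Fin (k+1) → U) (σ i.castSucc))) = 0 := by
          rw [← hj, Fin.snoc_castSucc, hfw]
          simp [hji.symm]
        rw [Finset.prod_eq_zero (Finset.mem_univ i) this]
        simp
      · -- last is moved; its preimage is some castSucc i
        obtain ⟨x, hx⟩ := σ.surjective (Fin.last k)
        have hxl : x ≠ Fin.last k := fun h => hlast (h ▸ hx)
        obtain ⟨i, rfl⟩ := Fin.exists_castSucc_eq.mpr hxl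
        have : f i (T ((Fin.snoc w u : Fin (k+1) → U) (σ i.castSucc))) = 0 := by
          rw [hx, Fin.snoc_last, hu', map_zero]
        rw [Finset.prod_eq_zero (Finset.mem_univ i) this]
        simp
    · intro h
      exact absurd (Finset.mem_univ _) h
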